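/- Let A be a unital C*-algebra and let φ : A → ℂ be a linear functional that is positive (for every x ∈ A, φ(x* x) is a nonnegative real number) and normalized (φ(1) = 1). Let a ∈ A be selfadjoint and let f : ℝ → ℝ be convex and differentiable. Then φ(a) and φ(f(a)) are real numbers and φ(f(a)) ≥ f(φ(a)), where f(a) denotes the element of A obtained by applying f to a via the continuous functional calculus. -/

import Mathlib

open scoped ComplexOrder

/-- If `φ` is a positive linear functional, `x` is selfadjoint and `g : ℝ → ℝ` is
continuous and nonnegative, then `0 ≤ φ (cfc g x)`. -/
lemma statement16_aux (A : Type*) [CStarAlgebra A]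
    (φ : A →ₗ[ℂ] ℂ)
    (hpos : ∀ x : A, 0 ≤ φ (star x * x))
    (x : A) (hx : IsSelfAdjoint x) (g : ℝ → ℝ) (hg : Continuous g)
    (hgnn : ∀ r, 0 ≤ g r) : 0 ≤ φ (cfc g x) := by
  have hb : IsSelfAdjoint (cfc (fun r => Real.sqrt (g r)) x) :=
    cfc_predicate (fun r => Real.sqrt (g r)) x
  have key : cfc g x
      = star (cfc (fun r => Real.sqrt (g r)) x) * cfc (fun r => Real.sqrt (g r)) x := by
    rw [hb.star_eq,
      ← cfc_mul (fun r => Real.sqrt (g r)) (fun r => Real.sqrt (g r)) x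
        (by fun_prop) (by fun_prop)]
    exact cfc_congr fun r _ => (Real.mul_self_sqrt (hgnn r)).symm
  rw [key]
  exact hpos _

/-- Jensen's inequality for a state on a unital C*-algebra: if `φ` is a
positive normalized linear functional, `a` is selfadjoint and `f : ℝ → ℝ` is
convex and differentiable, then `φ(a)` and `φ(f(a))` are real and
`φ(f(a)) ≥ f(φ(a))`, with `f(a)` given by the continuous functional calculus. -/
theorem statement16 (A : Type*) [CStarAlgebra A]
    (φ : A →ₗ[ℂ] ℂ)
    (hpos : ∀ x : A, 0 ≤ φ (star x * x))
    (hnorm : φ 1 = 1)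
    (a : A) (ha : IsSelfAdjoint a)
    (f : ℝ → ℝ) (hconv : ConvexOn ℝ Set.univ f) (hdiff : Differentiable ℝ f) :
    (φ a).im = 0 ∧ (φ (cfc f a)).im = 0 ∧ f ((φ a).re) ≤ (φ (cfc f a)).re := by
  -- φ maps selfadjoint elements to reals
  have hreal : ∀ x : A, IsSelfAdjoint x → (φ x).im = 0 := by
    intro x hx
    have h1 := statement16_aux A φ hpos x hx (fun r => max r 0)
      (by fun_prop) (fun r => le_max_right r 0)
    have h2 := statement16_aux A φ hpos x hx (fun r => max (-r) 0)
      (by fun_prop) (fun r => le_max_right (-r) 0)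
    have h3 : φ x = φ (cfc (fun r : ℝ => max r 0) x) - φ (cfc (fun r : ℝ => max (-r) 0) x) := by
      rw [← map_sub, ← cfc_sub (fun r : ℝ => max r 0) (fun r : ℝ => max (-r) 0) x
        (by fun_prop) (by fun_prop)]
      have : (fun r : ℝ => max r 0 - max (-r) 0) = fun r : ℝ => r := by
        funext r
        rcases le_total r 0 with h | h
        · rw [max_eq_right h, max_eq_left (by linarith)]; ring
        · rw [max_eq_left h, max_eq_right (by linarith)]; ring
      rw [this, cfc_id' ℝ x]
    rw [Complex.le_def] at h1 h2
    rw [h3, Complex.sub_im, ← h1.2, ← h2.2]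
    simp
  set t : ℝ := (φ a).re with ht
  have hφa : φ a = (t : ℂ) := by
    apply Complex.ext
    · simp; exact ht.symm
    · rw [hreal a ha]; simp
  set c : ℝ := deriv f t with hc
  -- supporting line inequality
  have key : ∀ x : ℝ, f t + c * (x - t) ≤ f x := by
    intro x
    rcases lt_trichotomy x t with hxt | hxt | hxt
    · have := hconv.slope_le_deriv (Set.mem_univ x) (Set.mem_univ t) hxt (hdiff t)
      rw [slope_def_field] at this
      have hd : 0 < t - x := by linarith
      rw [div_le_iff₀ hd] at this
      nlinarith
    · simp [hxt]
    · have := hconv.deriv_le_slope (Set.mem_univ t) (Set.mem_univ x) hxt (hdiff t)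
      rw [slope_def_field] at this
      have hd : 0 < x - t := by linarith
      rw [le_div_iff₀ hd] at this
      nlinarith
  -- φ applied to cfc of the nonneg function g r = f r - (c * r + (f t - c * t))
  have h0 : 0 ≤ φ (cfc (fun r : ℝ => f r - (c * r + (f t - c * t))) a) :=
    statement16_aux A φ hpos a ha _ (by have := hdiff.continuous; fun_prop) (fun r => by have := key r; linarith)
  have hcfc : cfc (fun r : ℝ => f r - (c * r + (f t - c * t))) a
      = cfc f a - (c • a + (f t - c * t) • (1 : A)) := by
    rw [cfc_sub _ _ a (hdiff.continuous.continuousOn) (by fun_prop)]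
    congr 1
    rw [cfc_add a _ _ (by fun_prop) (by fun_prop)]
    congr 1
    · rw [cfc_const_mul _ _ a (by fun_prop), cfc_id' ℝ a]
    · rw [cfc_const _ a, Algebra.algebraMap_eq_smul_one]
  rw [hcfc] at h0
  have hsmul1 : φ (c • a) = (c : ℂ) * φ a := by
    rw [← algebraMap_smul ℂ c a, map_smul, smul_eq_mul, Complex.coe_algebraMap]
  have hsmul2 : φ ((f t - c * t) • (1 : A)) = ((f t - c * t : ℝ) : ℂ) := by
    rw [← algebraMap_smul ℂ (f t - c * t) (1 : A), map_smul, smul_eq_mul,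
      Complex.coe_algebraMap, hnorm, mul_one]
  rw [map_sub, map_add, hsmul1, hsmul2, hφa] at h0
  have h0' : ((f t : ℂ)) ≤ φ (cfc f a) := by
    rw [← sub_nonneg]
    convert h0 using 1
    push_cast
    ring
  rw [Complex.le_def] at h0'
  refine ⟨hreal a ha, ?_, ?_⟩
  · rw [← h0'.2]; simp
  · simpa using h0'.1
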